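/- Let (X, d) be a locally compact separable metric space, μ a Borel probability measure on X, and u ∈ X such that for every null sequence (r_n), every v ∈ X \ {u}, and every sequence v_n → v, there exists a sequence u_n → u with liminf_{n→∞} μ(B(u_n,r_n))/μ(B(v_n,r_n)) ≥ 1. Then there exist a null sequence (r_n) and a sequence u_n → u such that for every sequence v_n → u, liminf_{n→∞} μ(B(u_n,r_n))/μ(B(v_n,r_n)) ≥ 1; that is, an optimal approximating sequence of u exists. -/

import Mathlib

open MeasureTheory Metric Filter Topology

/-- Ball-mass ratio with the conventions `c/0 = ∞` for `c > 0` and `0/0 = 1`. -/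
noncomputable def mRatio (a b : ENNReal) : ENNReal :=
  if b = 0 then (if a = 0 then 1 else ⊤) else a / b

lemma mRatio_self {a : ENNReal} (ha : a ≠ ⊤) : mRatio a a = 1 := by
  unfold mRatio
  rcases eq_or_ne a 0 with h | h
  · simp [h]
  · simp [h, ENNReal.div_self h ha]

lemma mRatio_key {A B C c : ENNReal} (hc0 : c ≠ 0) (hc1 : c ≤ 1) (hBC : c * C ≤ B) :
    c * mRatio A B ≤ mRatio A C := by
  have hct : c ≠ ⊤ := (lt_of_le_of_lt hc1 ENNReal.one_lt_top).ne
  rcases eq_or_ne C 0 with hC | hC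
  · rcases eq_or_ne B 0 with hB | hB
    · rcases eq_or_ne A 0 with hA | hA
      · simp [mRatio, hA, hB, hC, hc1]
      · simp [mRatio, hA, hB, hC]
    · rcases eq_or_ne A 0 with hA | hA
      · simp [mRatio, hA, hB, hC, ENNReal.zero_div]
      · simp [mRatio, hB, hC, hA]
  · have hB : B ≠ 0 := by
      intro h
      rw [h, nonpos_iff_eq_zero, mul_eq_zero] at hBC
      tauto
    have hCle : C ≤ B / c := (ENNReal.le_div_iff_mul_le (a := C) (b := c) (c := B)
      (Or.inl hc0) (Or.inl hct)).2 (by rwa [mul_comm])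
    have hrw : c * (A / B) = A / (B / c) := by
      rw [div_eq_mul_inv A (B / c), ENNReal.inv_div (Or.inl hct) (Or.inl hc0)]
      rw [div_eq_mul_inv, div_eq_mul_inv]
      ring
    calc c * mRatio A B = c * (A / B) := by rw [mRatio, if_neg hB]
      _ = A / (B / c) := hrw
      _ ≤ A / C := ENNReal.div_le_div_left hCle A
      _ = mRatio A C := by rw [mRatio, if_neg hC]

lemma liminf_key {A B C c : ℕ → ENNReal}
    (hc0 : ∀ n, c n ≠ 0) (hc1 : ∀ n, c n ≤ 1)
    (hcev : ∀ b : ENNReal, b < 1 → ∀ᶠ n in atTop, b ≤ c n)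
    (hBC : ∀ᶠ n in atTop, c n * C n ≤ B n)
    (hAB : 1 ≤ Filter.liminf (fun n => mRatio (A n) (B n)) atTop) :
    1 ≤ Filter.liminf (fun n => mRatio (A n) (C n)) atTop := by
  rw [Filter.le_liminf_iff]
  intro b hb
  obtain ⟨b', hbb', hb'1⟩ := exists_between hb
  have hb'0 : b' ≠ 0 := (lt_of_le_of_lt zero_le hbb').ne'
  have hb't : b' ≠ ⊤ := ne_top_of_lt hb'1
  have hq : b / b' < 1 := by
    rw [ENNReal.div_lt_iff (Or.inl hb'0) (Or.inl hb't), one_mul]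
    exact hbb'
  have h1 : ∀ᶠ n in atTop, b / b' < mRatio (A n) (B n) :=
    eventually_lt_of_lt_liminf (lt_of_lt_of_le hq hAB)
  have h2 : ∀ᶠ n in atTop, b' ≤ c n := hcev b' hb'1
  filter_upwards [h1, h2, hBC] with n hn1 hn2 hn3
  calc b = b' * (b / b') := (ENNReal.mul_div_cancel hb'0 hb't).symm
    _ < b' * mRatio (A n) (B n) := ENNReal.mul_lt_mul_right hb'0 hb't hn1
    _ ≤ c n * mRatio (A n) (B n) := mul_le_mul_left hn2 _
    _ ≤ mRatio (A n) (C n) := mRatio_key (hc0 n) (hc1 n) hn3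

theorem stmt19 {X : Type*} [MetricSpace X] [TopologicalSpace.SeparableSpace X]
    [LocallyCompactSpace X] [MeasurableSpace X] [BorelSpace X]
    (μ : Measure X) [IsProbabilityMeasure μ] (u : X)
    (hdom : ∀ r : ℕ → ℝ, (∀ n, 0 < r n) → Tendsto r atTop (𝓝 0) →
      ∀ v : X, v ≠ u → ∀ vs : ℕ → X, Tendsto vs atTop (𝓝 v) →
        ∃ us : ℕ → X, Tendsto us atTop (𝓝 u) ∧
          1 ≤ Filter.liminf
            (fun n => mRatio (μ (ball (us n) (r n))) (μ (ball (vs n) (r n)))) atTop) :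
    ∃ r : ℕ → ℝ, (∀ n, 0 < r n) ∧ Tendsto r atTop (𝓝 0) ∧
      ∃ us : ℕ → X, Tendsto us atTop (𝓝 u) ∧
        ∀ vs : ℕ → X, Tendsto vs atTop (𝓝 u) →
          1 ≤ Filter.liminf
            (fun n => mRatio (μ (ball (us n) (r n))) (μ (ball (vs n) (r n)))) atTop := by
  classical
  -- a compact closed ball around u
  obtain ⟨Kc, hKc, hKnhds⟩ := exists_compact_mem_nhds u
  obtain ⟨ρ, hρ, hballK⟩ := nhds_basis_closedBall.mem_iff.mp hKnhds
  set K : Set X := closedBall u ρ with hKdef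
  have hK : IsCompact K := hKc.of_isClosed_subset isClosed_closedBall hballK
  -- radii
  set R : ℕ → ℝ := fun n => 1 / ((n : ℝ) + 1) with hRdef
  have hRpos : ∀ n, 0 < R n := fun n => by positivity
  have hR0 : Tendsto R atTop (𝓝 0) := tendsto_one_div_add_atTop_nhds_zero_nat
  -- near-maximizer factors
  set cE : ℕ → ENNReal := fun n => 1 - ((n : ENNReal) + 2)⁻¹ with hcEdef
  have hn2top : ∀ n : ℕ, ((n : ENNReal) + 2) ≠ ⊤ := fun n => by
    simp [ENNReal.add_eq_top]
  have hinvne : ∀ n : ℕ, ((n : ENNReal) + 2)⁻¹ ≠ 0 := fun n =>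
    ENNReal.inv_ne_zero.2 (hn2top n)
  have hcE0 : ∀ n, cE n ≠ 0 := by
    intro n
    have h1 : ((n : ENNReal) + 2)⁻¹ < 1 := by
      rw [ENNReal.inv_lt_one]
      exact ENNReal.one_lt_two.trans_le le_add_self
    exact (tsub_pos_of_lt h1).ne'
  have hcE1 : ∀ n, cE n ≤ 1 := fun n => tsub_le_self
  have hcElt1 : ∀ n, cE n < 1 := fun n =>
    ENNReal.sub_lt_self ENNReal.one_ne_top one_ne_zero (hinvne n)
  have hcEten : Tendsto cE atTop (𝓝 1) := by
    have hinv : Tendsto (fun n : ℕ => ((n : ENNReal) + 2)⁻¹) atTop (𝓝 0) := by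
      have h2 : Tendsto (fun n : ℕ => ((n + 2 : ℕ) : ENNReal)⁻¹) atTop (𝓝 0) :=
        ENNReal.tendsto_inv_nat_nhds_zero.comp (tendsto_add_atTop_nat 2)
      convert h2 using 2 with n
      push_cast
      ring
    have := ENNReal.Tendsto.sub (tendsto_const_nhds (x := (1 : ENNReal)) (f := atTop))
      hinv (Or.inl ENNReal.one_ne_top)
    simpa using this
  have hcEev : ∀ b : ENNReal, b < 1 → ∀ᶠ n in atTop, b ≤ cE n := fun b hb =>
    hcEten.eventually (eventually_ge_nhds hb)
  -- sup of ball masses over K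
  set s : ℕ → ENNReal := fun n => ⨆ x ∈ K, μ (ball x (R n)) with hsdef
  have hs1 : ∀ n, s n ≤ 1 := fun n => iSup₂_le fun x _ => prob_le_one
  have hsnetop : ∀ n, s n ≠ ⊤ := fun n => (lt_of_le_of_lt (hs1 n) ENNReal.one_lt_top).ne
  have huK : u ∈ K := mem_closedBall_self hρ.le
  -- choose near-maximizers
  have hx : ∀ n, ∃ p, p ∈ K ∧ cE n * s n ≤ μ (ball p (R n)) := by
    intro n
    by_cases hs : s n = 0
    · exact ⟨u, huK, by simp [hs]⟩
    · have hlt : cE n * s n < s n := by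
        have := ENNReal.mul_lt_mul_left hs (hsnetop n) (hcElt1 n)
        simpa using this
      rw [hsdef] at hlt
      simp only [lt_iSup_iff] at hlt
      obtain ⟨p, hpK, hp⟩ := hlt
      exact ⟨p, hpK, hp.le⟩
  choose xc hxK hxB using hx
  -- convergent subsequence of the near-maximizers
  obtain ⟨a, haK, φ, hφ, hxa⟩ := hK.tendsto_subseq hxK
  have hrpos : ∀ k, 0 < R (φ k) := fun k => hRpos _
  have hrten : Tendsto (fun k => R (φ k)) atTop (𝓝 0) := hR0.comp hφ.tendsto_atTop
  -- main reduction: dominating the near-maximizers suffices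
  have main : ∀ us : ℕ → X,
      1 ≤ Filter.liminf
        (fun k => mRatio (μ (ball (us k) (R (φ k)))) (μ (ball (xc (φ k)) (R (φ k))))) atTop →
      ∀ vs : ℕ → X, Tendsto vs atTop (𝓝 u) →
        1 ≤ Filter.liminf
          (fun k => mRatio (μ (ball (us k) (R (φ k)))) (μ (ball (vs k) (R (φ k))))) atTop := by
    intro us hAB vs hvs
    refine liminf_key (c := fun k => cE (φ k)) (fun k => hcE0 _) (fun k => hcE1 _)
      (fun b hb => hφ.tendsto_atTop.eventually (hcEev b hb)) ?_ hAB
    have hvsK : ∀ᶠ k in atTop, vs k ∈ K :=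
      hvs.eventually (closedBall_mem_nhds u hρ)
    filter_upwards [hvsK] with k hk
    calc cE (φ k) * μ (ball (vs k) (R (φ k)))
        ≤ cE (φ k) * s (φ k) :=
          mul_le_mul_right (le_biSup (fun x => μ (ball x (R (φ k)))) hk) _
      _ ≤ μ (ball (xc (φ k)) (R (φ k))) := hxB (φ k)
  by_cases hau : a = u
  · -- limit is u: the near-maximizers themselves work
    refine ⟨fun k => R (φ k), hrpos, hrten, fun k => xc (φ k), by rwa [hau] at hxa, ?_⟩
    refine main (fun k => xc (φ k)) ?_
    have : ∀ k, mRatio (μ (ball (xc (φ k)) (R (φ k)))) (μ (ball (xc (φ k)) (R (φ k)))) = 1 :=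
      fun k => mRatio_self (measure_ne_top μ _)
    simp only [this]
    simp
  · -- limit is some v ≠ u: apply the hypothesis
    obtain ⟨us, hus, hAB⟩ := hdom (fun k => R (φ k)) hrpos hrten a hau
      (fun k => xc (φ k)) hxa
    exact ⟨fun k => R (φ k), hrpos, hrten, us, hus, main us hAB⟩
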